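/- If θ ∈ [0, π] satisfies cos(θ) = cos(3π/7) + cos(2π/7) - 1, then θ/π is irrational. -/

import Mathlib

open Polynomial

private lemma cheb_abs (x : ℝ) (hx : x ≤ -2) : ∀ n : ℕ,
    1 ≤ |((Chebyshev.T ℝ (n : ℤ)).eval x)| ∧
    2 ≤ |((Chebyshev.T ℝ ((n : ℤ) + 1)).eval x)| ∧
    |((Chebyshev.T ℝ (n : ℤ)).eval x)| ≤ |((Chebyshev.T ℝ ((n : ℤ) + 1)).eval x)| := by
  have hxabs : 2 ≤ |x| := by rw [abs_of_nonpos (by linarith)]; linarith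
  intro n
  induction n with
  | zero =>
    norm_num [Chebyshev.T_zero, Chebyshev.T_one]
    exact ⟨by linarith, by linarith⟩
  | succ m ih =>
    obtain ⟨ih1, ih2, ih3⟩ := ih
    have hrec := Chebyshev.T_add_two ℝ (m : ℤ)
    have he2 : (Chebyshev.T ℝ ((m : ℤ) + 2)).eval x
        = 2 * x * ((Chebyshev.T ℝ ((m : ℤ) + 1)).eval x) - (Chebyshev.T ℝ (m : ℤ)).eval x := by
      rw [hrec]; simp
    have hcast1 : ((m + 1 : ℕ) : ℤ) = (m : ℤ) + 1 := by push_cast; ring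
    have hcast2 : ((m + 1 : ℕ) : ℤ) + 1 = (m : ℤ) + 2 := by push_cast; ring
    rw [hcast2, hcast1, he2]
    set e0 := (Chebyshev.T ℝ (m : ℤ)).eval x
    set e1 := (Chebyshev.T ℝ ((m : ℤ) + 1)).eval x
    have hkey : 2 * |x| * |e1| - |e0| ≤ |2 * x * e1 - e0| := by
      have h1 := abs_sub_abs_le_abs_sub (2 * x * e1) e0
      have h2 : |2 * x * e1| = 2 * |x| * |e1| := by
        rw [abs_mul, abs_mul]; norm_num
      linarith
    have hx4 : 4 * |e1| ≤ 2 * |x| * |e1| := by nlinarith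
    refine ⟨by linarith, by linarith, by linarith⟩

private lemma no_int_sol (a b : ℤ) (hb1 : 1 ≤ b) (hco : IsCoprime a b)
    (hz : 8 * a ^ 3 + 24 * a ^ 2 * b + 10 * a * b ^ 2 + b ^ 3 = 0) : False := by
  have hab : a ∣ b ^ 3 := ⟨-(8 * a ^ 2 + 24 * a * b + 10 * b ^ 2), by linear_combination hz⟩
  have haunit : IsUnit a := (hco.pow_right (n := 3)).isUnit_of_dvd' dvd_rfl hab
  have hba : b ∣ 8 * a ^ 3 := ⟨-(24 * a ^ 2 + 10 * a * b + b ^ 2), by linear_combination hz⟩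
  have hb8 : b ∣ 8 := ((hco.symm).pow_right (n := 3)).dvd_of_dvd_mul_right hba
  have hble : b ≤ 8 := Int.le_of_dvd (by norm_num) hb8
  rcases Int.isUnit_iff.mp haunit with ha | ha <;> rw [ha] at hz <;>
    interval_cases b <;> norm_num at hz

private lemma no_rat_root (s : ℚ) : s ^ 3 + 3 * s ^ 2 + (5 / 4) * s + 1 / 8 ≠ 0 := by
  intro hs
  have hden : ((s.den : ℚ)) ≠ 0 := by
    exact_mod_cast s.den_nz
  have hnum : (s.num : ℚ) = s * (s.den : ℚ) := by
    rw [Rat.mul_den_eq_num]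
  have hz : ((8 * s.num ^ 3 + 24 * s.num ^ 2 * (s.den : ℤ) + 10 * s.num * (s.den : ℤ) ^ 2
      + ((s.den : ℤ)) ^ 3 : ℤ) : ℚ) = 0 := by
    push_cast
    rw [hnum]
    linear_combination (8 * (s.den : ℚ) ^ 3) * hs
  have hz' : 8 * s.num ^ 3 + 24 * s.num ^ 2 * (s.den : ℤ) + 10 * s.num * (s.den : ℤ) ^ 2
      + ((s.den : ℤ)) ^ 3 = 0 := by exact_mod_cast hz
  have hco : IsCoprime s.num ((s.den : ℤ)) := by
    rw [Int.isCoprime_iff_gcd_eq_one]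
    simpa [Int.gcd] using s.reduced
  exact no_int_sol s.num (s.den : ℤ) (by exact_mod_cast s.pos) hco hz'

set_option maxHeartbeats 1000000 in
theorem theta_seven_irrational (θ : ℝ) (h0 : 0 ≤ θ) (h1 : θ ≤ Real.pi)
    (hθ : Real.cos θ = Real.cos (3 * Real.pi / 7) + Real.cos (2 * Real.pi / 7) - 1) :
    Irrational (θ / Real.pi) := by
  have hπ : (0 : ℝ) < Real.pi := Real.pi_pos
  set y := Real.cos (Real.pi / 7) with hy
  have hy0 : 0 < y := by
    apply Real.cos_pos_of_mem_Ioo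
    constructor <;> [linarith; linarith]
  have h2 : Real.cos (2 * Real.pi / 7) = 2 * y ^ 2 - 1 := by
    rw [show 2 * Real.pi / 7 = 2 * (Real.pi / 7) by ring, Real.cos_two_mul]
  have h3 : Real.cos (3 * Real.pi / 7) = 4 * y ^ 3 - 3 * y := by
    rw [show 3 * Real.pi / 7 = 3 * (Real.pi / 7) by ring, Real.cos_three_mul]
  have h4 : Real.cos (4 * (Real.pi / 7)) = -(Real.cos (3 * (Real.pi / 7))) := by
    rw [show 4 * (Real.pi / 7) = Real.pi - 3 * (Real.pi / 7) by ring, Real.cos_pi_sub]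
  have h4' : 2 * (2 * y ^ 2 - 1) ^ 2 - 1 = -(4 * y ^ 3 - 3 * y) := by
    rw [← Real.cos_three_mul, ← h4,
      show 4 * (Real.pi / 7) = 2 * (2 * (Real.pi / 7)) by ring, Real.cos_two_mul,
      Real.cos_two_mul]
  have hkey : (y + 1) * (8 * y ^ 3 - 4 * y ^ 2 - 4 * y + 1) = 0 := by linear_combination h4'
  have hq : 8 * y ^ 3 - 4 * y ^ 2 - 4 * y + 1 = 0 := by
    rcases mul_eq_zero.mp hkey with h | h
    · linarith
    · exact h
  have hc : 8 * (Real.cos θ) ^ 3 + 24 * (Real.cos θ) ^ 2 + 10 * Real.cos θ + 1 = 0 := by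
    rw [hθ, h3, h2]
    linear_combination (64 * y ^ 6 + 128 * y ^ 5 - 128 * y ^ 3 - 56 * y ^ 2 + 22 * y + 13) * hq
  -- suppose rational
  by_contra hcon
  obtain ⟨r, hr⟩ := not_not.mp hcon
  have hθπ : θ = (r : ℝ) * Real.pi := by
    rw [eq_div_iff hπ.ne'] at hr; linarith
  -- the minimal polynomial
  set P : ℚ[X] := X ^ 3 + C 3 * X ^ 2 + C (5 / 4) * X + C (1 / 8) with hPdef
  have hPm : P.Monic := by
    unfold P
    monicity!
  have hPdeg : P.natDegree = 3 := by
    unfold P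
    compute_degree!
  have hProots : P.roots = 0 := by
    rw [Multiset.eq_zero_iff_forall_notMem]
    intro s hs
    have := (mem_roots hPm.ne_zero).mp hs
    rw [IsRoot, hPdef] at this
    simp only [eval_add, eval_mul, eval_pow, eval_X, eval_C] at this
    exact no_rat_root s (by linarith)
  have hPirr : Irreducible P :=
    (irreducible_iff_roots_eq_zero_of_degree_le_three (by rw [hPdeg]; norm_num) (by rw [hPdeg])).mpr hProots
  have hPc : (aeval (Real.cos θ)) P = 0 := by
    rw [hPdef]
    simp only [map_add, map_mul, map_pow, aeval_X, aeval_C]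
    rw [show ((algebraMap ℚ ℝ) 3) = 3 by norm_num, show ((algebraMap ℚ ℝ) (5/4)) = 5/4 by norm_num,
      show ((algebraMap ℚ ℝ) (1/8)) = 1/8 by norm_num]
    linarith [hc]
  have hmin : minpoly ℚ (Real.cos θ) = P := (minpoly.eq_of_irreducible_of_monic hPirr hPc hPm).symm
  -- Chebyshev polynomial relation
  set qn : ℕ := r.den with hqn
  set pn : ℤ := r.num with hpn
  have hqθ : ((qn : ℤ) : ℝ) * θ = (pn : ℝ) * Real.pi := by
    have hrn : (r : ℝ) = (pn : ℝ) / (qn : ℝ) := by rw [Rat.cast_def]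
    have hq0 : ((qn : ℝ)) ≠ 0 := Nat.cast_ne_zero.mpr r.den_nz
    rw [hθπ, hrn]
    push_cast
    field_simp
  have hcos2 : Real.cos (((qn : ℤ) : ℝ) * θ) ^ 2 = 1 := by
    rw [hqθ]
    have h2p : Real.cos (2 * ((pn : ℝ) * Real.pi)) = 1 := by
      rw [show 2 * ((pn : ℝ) * Real.pi) = (pn : ℝ) * (2 * Real.pi) by ring]
      exact Real.cos_int_mul_two_pi pn
    have := Real.cos_two_mul ((pn : ℝ) * Real.pi)
    nlinarith
  set G : ℚ[X] := (Chebyshev.T ℚ (qn : ℤ)) ^ 2 - 1 with hGdef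
  have hGmap : G.map (algebraMap ℚ ℝ) = (Chebyshev.T ℝ (qn : ℤ)) ^ 2 - 1 := by
    rw [hGdef]
    simp [Polynomial.map_sub, Polynomial.map_pow, Polynomial.map_one, Chebyshev.map_T]
  have hGc : (aeval (Real.cos θ)) G = 0 := by
    rw [aeval_def, ← eval_map, hGmap]
    simp only [eval_sub, eval_pow, eval_one, Chebyshev.T_real_cos]
    rw [hcos2]
    ring
  have hdvd : P ∣ G := hmin ▸ minpoly.dvd ℚ _ hGc
  -- real root in (-3, -2)
  obtain ⟨ρ, hρmem, hρ⟩ : ∃ ρ ∈ Set.Icc (-3 : ℝ) (-2), 8 * ρ ^ 3 + 24 * ρ ^ 2 + 10 * ρ + 1 = 0 := by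
    have hcont : ContinuousOn (fun x : ℝ => 8 * x ^ 3 + 24 * x ^ 2 + 10 * x + 1)
        (Set.Icc (-3) (-2)) := by fun_prop
    have hsub := intermediate_value_Icc (by norm_num : (-3 : ℝ) ≤ -2) hcont
    have h0m : (0 : ℝ) ∈ Set.Icc ((fun x : ℝ => 8 * x ^ 3 + 24 * x ^ 2 + 10 * x + 1) (-3))
        ((fun x : ℝ => 8 * x ^ 3 + 24 * x ^ 2 + 10 * x + 1) (-2)) := by norm_num
    obtain ⟨ρ, hm, he⟩ := hsub h0m
    exact ⟨ρ, hm, he⟩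
  have hρP : (aeval ρ) P = 0 := by
    rw [hPdef]
    simp only [map_add, map_mul, map_pow, aeval_X, aeval_C]
    rw [show ((algebraMap ℚ ℝ) 3) = 3 by norm_num, show ((algebraMap ℚ ℝ) (5/4)) = 5/4 by norm_num,
      show ((algebraMap ℚ ℝ) (1/8)) = 1/8 by norm_num]
    linarith [hρ]
  have hρG : (aeval ρ) G = 0 := by
    obtain ⟨k, hk⟩ := hdvd
    rw [hk, map_mul, hρP, zero_mul]
  have hTρ : ((Chebyshev.T ℝ (qn : ℤ)).eval ρ) ^ 2 = 1 := by
    have := hρG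
    rw [aeval_def, ← eval_map, hGmap] at this
    simp only [eval_sub, eval_pow, eval_one] at this
    linarith
  obtain ⟨m, hm⟩ : ∃ m : ℕ, qn = m + 1 := ⟨qn - 1, by have := r.pos; omega⟩
  have hρ2 : ρ ≤ -2 := hρmem.2
  have hbig := (cheb_abs ρ hρ2 m).2.1
  have hidx : ((m : ℤ) + 1) = (qn : ℤ) := by rw [hm]; push_cast; ring
  rw [hidx] at hbig
  have habs : |((Chebyshev.T ℝ (qn : ℤ)).eval ρ)| ^ 2 = 1 := by
    rw [sq_abs]; exact hTρ
  nlinarith [hbig, habs]
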